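/- For every point p = (a,b,c) ∈ ℝ^3, there exist constants c_1, c_2, c_3 ∈ ℝ such that (xyz − c_1 x² − c_2 y² − c_3 xyz²)/(x² + y² + |xyz²|) → 0 as (x,y,z) → p along points where (x,y) ≠ (0,0), and xyz − c_1 x² − c_2 y² − c_3 xyz² → 0 as (x,y,z) → p. (If c ≠ 0 take c_3 = 1/c and c_1 = c_2 = 0; if c = 0 take all c_i = 0.) -/

import Mathlib

open Filter Topology

/-- Hochster's example passes the pointwise test at every point of `ℝ³`:
for every `p = (a,b,c)` there are constants `c₁, c₂, c₃` such that
`(xyz − c₁x² − c₂y² − c₃xyz²)/(x² + y² + |xyz²|) → 0` as `(x,y,z) → p` along points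
with `(x,y) ≠ (0,0)`, and `xyz − c₁x² − c₂y² − c₃xyz² → 0` as `(x,y,z) → p`. -/
theorem statement4 (a b c : ℝ) :
    ∃ c₁ c₂ c₃ : ℝ,
      Tendsto (fun q : ℝ × ℝ × ℝ =>
          (q.1 * q.2.1 * q.2.2 - c₁ * q.1 ^ 2 - c₂ * q.2.1 ^ 2
              - c₃ * (q.1 * q.2.1 * q.2.2 ^ 2)) /
            (q.1 ^ 2 + q.2.1 ^ 2 + |q.1 * q.2.1 * q.2.2 ^ 2|))
        (𝓝[{q : ℝ × ℝ × ℝ | (q.1, q.2.1) ≠ (0, 0)}] (a, b, c)) (𝓝 0) ∧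
      Tendsto (fun q : ℝ × ℝ × ℝ =>
          q.1 * q.2.1 * q.2.2 - c₁ * q.1 ^ 2 - c₂ * q.2.1 ^ 2
            - c₃ * (q.1 * q.2.1 * q.2.2 ^ 2))
        (𝓝 (a, b, c)) (𝓝 0) := by
  rcases eq_or_ne c 0 with hc | hc
  · refine ⟨0, 0, 0, ?_, ?_⟩
    · apply squeeze_zero_norm' (a := fun q : ℝ × ℝ × ℝ => |q.2.2|)
      · filter_upwards [self_mem_nhdsWithin] with q hq
        obtain ⟨x, y, z⟩ := q
        simp only [Set.mem_setOf_eq, ne_eq, Prod.mk.injEq, not_and] at hq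
        have hxy : x ≠ 0 ∨ y ≠ 0 := by
          by_contra h
          push_neg at h
          exact hq h.1 h.2
        have hpos : 0 < x ^ 2 + y ^ 2 := by
          rcases hxy with h | h
          · have : 0 < x ^ 2 := by positivity
            nlinarith [sq_nonneg y]
          · have : 0 < y ^ 2 := by positivity
            nlinarith [sq_nonneg x]
        have hden : 0 < x ^ 2 + y ^ 2 + |x * y * z ^ 2| := by
          have := abs_nonneg (x * y * z ^ 2)
          linarith
        simp only [zero_mul, sub_zero, Real.norm_eq_abs]
        rw [abs_div, abs_of_pos hden, div_le_iff₀ hden]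
        have h1 : |x * y * z| = |x * y| * |z| := abs_mul _ _
        have h2 : |x * y| ≤ (x ^ 2 + y ^ 2) / 2 := by
          nlinarith [sq_nonneg (|x| - |y|), abs_mul x y, sq_abs x, sq_abs y,
            abs_nonneg (x * y)]
        nlinarith [abs_nonneg z, abs_nonneg (x * y * z ^ 2), abs_nonneg (x * y)]
      · have hcont : Continuous (fun q : ℝ × ℝ × ℝ => |q.2.2|) :=
          continuous_abs.comp (continuous_snd.comp continuous_snd)
        have := (hcont.tendsto (a, b, c)).mono_left
          (nhdsWithin_le_nhds (s := {q : ℝ × ℝ × ℝ | (q.1, q.2.1) ≠ (0, 0)}))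
        simpa [hc] using this
    · have hcont : Continuous (fun q : ℝ × ℝ × ℝ =>
          q.1 * q.2.1 * q.2.2 - 0 * q.1 ^ 2 - 0 * q.2.1 ^ 2
            - 0 * (q.1 * q.2.1 * q.2.2 ^ 2)) := by fun_prop
      have := hcont.tendsto (a, b, c)
      simpa [hc] using this
  · refine ⟨0, 0, 1 / c, ?_, ?_⟩
    · apply squeeze_zero_norm'
        (a := fun q : ℝ × ℝ × ℝ => |c - q.2.2| / (|c| * |q.2.2|))
      · have hzev : ∀ᶠ q : ℝ × ℝ × ℝ in
            𝓝[{q : ℝ × ℝ × ℝ | (q.1, q.2.1) ≠ (0, 0)}] (a, b, c), q.2.2 ≠ 0 := by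
          apply eventually_nhdsWithin_of_eventually_nhds
          have hca : ContinuousAt (fun q : ℝ × ℝ × ℝ => q.2.2) (a, b, c) := by fun_prop
          exact hca.eventually_ne hc
        filter_upwards [hzev, self_mem_nhdsWithin] with q hz hq
        obtain ⟨x, y, z⟩ := q
        simp only at hz
        simp only [Set.mem_setOf_eq, ne_eq, Prod.mk.injEq, not_and] at hq
        have hxy : x ≠ 0 ∨ y ≠ 0 := by
          by_contra h
          push_neg at h
          exact hq h.1 h.2
        have hpos : 0 < x ^ 2 + y ^ 2 := by
          rcases hxy with h | h
          · have : 0 < x ^ 2 := by positivity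
            nlinarith [sq_nonneg y]
          · have : 0 < y ^ 2 := by positivity
            nlinarith [sq_nonneg x]
        have hden : 0 < x ^ 2 + y ^ 2 + |x * y * z ^ 2| := by
          have := abs_nonneg (x * y * z ^ 2)
          linarith
        have hnum : x * y * z - 0 * x ^ 2 - 0 * y ^ 2 - 1 / c * (x * y * z ^ 2)
            = (x * y * (c - z) * z) / c := by
          field_simp
          ring
        simp only [Real.norm_eq_abs]
        rw [hnum, abs_div, abs_div, abs_of_pos hden, div_div]
        rw [div_le_div_iff₀ (by positivity) (by positivity)]
        have habs : |x * y * (c - z) * z| = |x * y| * |c - z| * |z| := by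
          rw [abs_mul, abs_mul]
        have hden2 : |x * y * z ^ 2| = |x * y| * z ^ 2 := by
          rw [abs_mul, abs_of_nonneg (sq_nonneg z)]
        rw [habs, hden2]
        have hzz : |z| * |z| = z ^ 2 := by
          rw [← sq_abs z]; ring
        calc |x * y| * |c - z| * |z| * (|c| * |z|)
            = |c| * |c - z| * (|x * y| * z ^ 2) := by rw [← hzz]; ring
          _ ≤ |c| * |c - z| * (x ^ 2 + y ^ 2 + |x * y| * z ^ 2) := by
              apply mul_le_mul_of_nonneg_left _
                (mul_nonneg (abs_nonneg c) (abs_nonneg (c - z)))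
              linarith
          _ = |c - z| * (|c| * (x ^ 2 + y ^ 2 + |x * y| * z ^ 2)) := by ring
      · have h1 : Tendsto (fun q : ℝ × ℝ × ℝ => |c - q.2.2| / (|c| * |q.2.2|))
            (𝓝 (a, b, c)) (𝓝 (|c - c| / (|c| * |c|))) := by
          apply Tendsto.div
          · exact ((continuous_const.sub
              (continuous_snd.comp continuous_snd)).abs.tendsto _)
          · exact tendsto_const_nhds.mul
              ((continuous_snd.comp continuous_snd).abs.tendsto _)
          · positivity
        have := h1.mono_left
          (nhdsWithin_le_nhds (s := {q : ℝ × ℝ × ℝ | (q.1, q.2.1) ≠ (0, 0)}))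
        simpa using this
    · have hcont : Continuous (fun q : ℝ × ℝ × ℝ =>
          q.1 * q.2.1 * q.2.2 - 0 * q.1 ^ 2 - 0 * q.2.1 ^ 2
            - 1 / c * (q.1 * q.2.1 * q.2.2 ^ 2)) := by fun_prop
      have h0 := hcont.tendsto (a, b, c)
      have hv : a * b * c - 0 * a ^ 2 - 0 * b ^ 2 - 1 / c * (a * b * c ^ 2) = 0 := by
        field_simp
        ring
      rw [show (a * b * c - 0 * a ^ 2 - 0 * b ^ 2 - 1 / c * (a * b * c ^ 2)) = (0:ℝ)
        from hv] at h0
      exact h0
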